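/- arXiv:2005.13807 — 2 statements merged into one kernel-verified Lean document; each statement's English description precedes it below -/
import Mathlib

section
/- Let x₀ ∈ ℝⁿ be nonzero, a ∈ ℝⁿ, ρ > 0, M := (2x₀x₀ᵀ + ρI)⁻¹, and b₂ < b₁. Define λ := (ρ·aᵀMx₀ − b₁)/(x₀ᵀMx₀) if ρ·aᵀMx₀ − b₁ > 0; λ := (ρ·aᵀMx₀ − b₂)/(x₀ᵀMx₀) if ρ·aᵀMx₀ − b₂ < 0; and λ := 0 otherwise. Then Φ* := M(ρa − λx₀) is feasible, i.e., b₂ ≤ (Φ*)ᵀx₀ ≤ b₁. -/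
open Matrix

lemma vecMulVec_mulVec' {n : ℕ} (x y u : Fin n → ℝ) :
    (Matrix.vecMulVec x y).mulVec u = (y ⬝ᵥ u) • x := by
  ext i
  simp only [Matrix.mulVec, dotProduct, Matrix.vecMulVec_apply, Pi.smul_apply,
    smul_eq_mul, Finset.sum_mul]
  exact Finset.sum_congr rfl fun k _ => by ring

lemma vecMulVec_mul_vecMulVec' {n : ℕ} (x y u v : Fin n → ℝ) :
    Matrix.vecMulVec x y * Matrix.vecMulVec u v = (y ⬝ᵥ u) • Matrix.vecMulVec x v := by
  ext i j
  simp only [Matrix.mul_apply, Matrix.vecMulVec_apply, Matrix.smul_apply, smul_eq_mul,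
    dotProduct, Finset.sum_mul]
  exact Finset.sum_congr rfl fun k _ => by ring

lemma vecMulVec_transpose' {n : ℕ} (x y : Fin n → ℝ) :
    (Matrix.vecMulVec x y)ᵀ = Matrix.vecMulVec y x := by
  ext i j
  simp [Matrix.vecMulVec_apply, mul_comm]

theorem explicit_solution_feasible
    (n : ℕ) (x₀ a : Fin n → ℝ) (hx₀ : x₀ ≠ 0) (ρ b₁ b₂ : ℝ) (hρ : 0 < ρ) (hb : b₂ < b₁)
    (M : Matrix (Fin n) (Fin n) ℝ)
    (hM : M = ((2 : ℝ) • Matrix.vecMulVec x₀ x₀ + ρ • (1 : Matrix (Fin n) (Fin n) ℝ))⁻¹)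
    (lam : ℝ)
    (hlam : lam =
      if ρ * (a ⬝ᵥ M.mulVec x₀) - b₁ > 0 then
        (ρ * (a ⬝ᵥ M.mulVec x₀) - b₁) / (x₀ ⬝ᵥ M.mulVec x₀)
      else if ρ * (a ⬝ᵥ M.mulVec x₀) - b₂ < 0 then
        (ρ * (a ⬝ᵥ M.mulVec x₀) - b₂) / (x₀ ⬝ᵥ M.mulVec x₀)
      else 0)
    (Φs : Fin n → ℝ)
    (hΦs : Φs = M.mulVec (ρ • a - lam • x₀)) :
    b₂ ≤ Φs ⬝ᵥ x₀ ∧ Φs ⬝ᵥ x₀ ≤ b₁ := by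
  have htnn : (0:ℝ) ≤ x₀ ⬝ᵥ x₀ := Finset.sum_nonneg fun i _ => mul_self_nonneg _
  have ht : 0 < x₀ ⬝ᵥ x₀ :=
    htnn.lt_of_ne (fun h => hx₀ (dotProduct_self_eq_zero.mp h.symm))
  set t : ℝ := x₀ ⬝ᵥ x₀ with ht_def
  have hd : 0 < ρ + 2 * t := by positivity
  set A : Matrix (Fin n) (Fin n) ℝ :=
    (2 : ℝ) • Matrix.vecMulVec x₀ x₀ + ρ • (1 : Matrix (Fin n) (Fin n) ℝ) with hA
  set β : ℝ := 2 / (ρ * (ρ + 2 * t)) with hβ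
  set B : Matrix (Fin n) (Fin n) ℝ :=
    ρ⁻¹ • (1 : Matrix (Fin n) (Fin n) ℝ) - β • Matrix.vecMulVec x₀ x₀ with hB
  set C : Matrix (Fin n) (Fin n) ℝ := Matrix.vecMulVec x₀ x₀ with hC
  have hCC : C * C = t • C := by
    rw [hC, vecMulVec_mul_vecMulVec', ← ht_def]
  have hAB : A * B = 1 := by
    have expand : ((2 : ℝ) • C + ρ • (1 : Matrix (Fin n) (Fin n) ℝ)) *
        (ρ⁻¹ • (1 : Matrix (Fin n) (Fin n) ℝ) - β • C)
        = (2 * ρ⁻¹ - 2 * (β * t) - ρ * β) • C + (ρ * ρ⁻¹) • (1 : Matrix (Fin n) (Fin n) ℝ) := by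
      simp only [Matrix.add_mul, Matrix.mul_sub, smul_mul_assoc, mul_smul_comm,
        Matrix.mul_one, Matrix.one_mul, hCC]
      module
    rw [expand, mul_inv_cancel₀ hρ.ne']
    have hc : 2 * ρ⁻¹ - 2 * (β * t) - ρ * β = 0 := by
      rw [hβ]; field_simp; ring
    rw [hc]
    simp
  have hMB : M = B := by
    rw [hM]
    exact Matrix.inv_eq_right_inv hAB
  have hMx : M.mulVec x₀ = (ρ + 2 * t)⁻¹ • x₀ := by
    rw [hMB, hB, hC]
    simp only [Matrix.sub_mulVec, Matrix.smul_mulVec, Matrix.one_mulVec,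
      vecMulVec_mulVec', ← ht_def, smul_smul]
    rw [← sub_smul]
    congr 1
    rw [hβ]
    field_simp
    ring
  set k : ℝ := (ρ + 2 * t)⁻¹ with hk
  have hkpos : 0 < k := inv_pos.mpr hd
  have hMsym : Mᵀ = M := by
    rw [hMB, hB, hC]
    rw [Matrix.transpose_sub, Matrix.transpose_smul, Matrix.transpose_smul,
      Matrix.transpose_one, vecMulVec_transpose']
  have hdot : Φs ⬝ᵥ x₀ = ρ * (k * (a ⬝ᵥ x₀)) - lam * (k * t) := by
    rw [hΦs, dotProduct_comm, Matrix.dotProduct_mulVec, ← Matrix.mulVec_transpose,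
      hMsym, hMx]
    simp only [smul_dotProduct, dotProduct_sub, dotProduct_smul,
      smul_eq_mul, ← ht_def]
    rw [dotProduct_comm x₀ a]
    try ring
  have haM : a ⬝ᵥ M.mulVec x₀ = k * (a ⬝ᵥ x₀) := by
    rw [hMx, dotProduct_smul, smul_eq_mul]
  have hxM : x₀ ⬝ᵥ M.mulVec x₀ = k * t := by
    rw [hMx, dotProduct_smul, smul_eq_mul, ← ht_def]
  rw [haM, hxM] at hlam
  set s : ℝ := a ⬝ᵥ x₀
  have hkt : k * t ≠ 0 := by positivity
  by_cases h1 : ρ * (k * s) - b₁ > 0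
  · rw [if_pos h1] at hlam
    have : Φs ⬝ᵥ x₀ = b₁ := by
      rw [hdot, hlam]
      field_simp
      ring
    rw [this]
    exact ⟨hb.le, le_refl _⟩
  · rw [if_neg h1] at hlam
    by_cases h2 : ρ * (k * s) - b₂ < 0
    · rw [if_pos h2] at hlam
      have : Φs ⬝ᵥ x₀ = b₂ := by
        rw [hdot, hlam]
        field_simp
        ring
      rw [this]
      exact ⟨le_refl _, hb.le⟩
    · rw [if_neg h2] at hlam
      rw [hdot, hlam]
      push_neg at h1 h2
      constructor <;> linarith
end

section
/- Let Z, 𝒜, ℬ be as in the finite-horizon SLS setup and K block-lower-triangular. Define Φ_x := (I − Z(𝒜 + ℬK))⁻¹ and Φ_u := KΦ_x. Then the pair (Φ_x, Φ_u) satisfies the affine SLS constraint (I − Z𝒜)Φ_x − ZℬΦ_u = I, and conversely, if block-lower-triangular matrices (Φ_x, Φ_u) satisfy (I − Z𝒜)Φ_x − ZℬΦ_u = I with Φ_x invertible, then K := Φ_u Φ_x⁻¹ yields (I − Z(𝒜 + ℬK))⁻¹ = Φ_x and K(I − Z(𝒜 + ℬK))⁻¹ = Φ_u. -/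
open Matrix

/-- Block lower triangular (causal) operator: block (i,j) vanishes when j > i. -/
def BlockLowerTri {T m p : ℕ}
    (M : Matrix (Fin (T + 1) × Fin m) (Fin (T + 1) × Fin p) ℝ) : Prop :=
  ∀ a b, (a.1 : ℕ) < (b.1 : ℕ) → M a b = 0

/-- Block-downshift operator: identity blocks on the first block subdiagonal. -/
def downshift (T n : ℕ) : Matrix (Fin (T + 1) × Fin n) (Fin (T + 1) × Fin n) ℝ :=
  fun a b => if (a.1 : ℕ) = (b.1 : ℕ) + 1 ∧ a.2 = b.2 then 1 else 0

/-- blkdiag(A, ..., A, 0). -/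
def blkDiag {T n p : ℕ} (A : Matrix (Fin n) (Fin p) ℝ) :
    Matrix (Fin (T + 1) × Fin n) (Fin (T + 1) × Fin p) ℝ :=
  fun a b => if a.1 = b.1 ∧ (a.1 : ℕ) < T then A a.2 b.2 else 0

/-- Strictly block-lower matrices are nilpotent. -/
lemma strict_nilpotent {T n : ℕ}
    (M : Matrix (Fin (T + 1) × Fin n) (Fin (T + 1) × Fin n) ℝ)
    (h : ∀ a b, (a.1 : ℕ) ≤ (b.1 : ℕ) → M a b = 0) :
    M ^ (T + 1) = 0 := by
  have key : ∀ k (a b : Fin (T + 1) × Fin n), (a.1 : ℕ) < (b.1 : ℕ) + k →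
      (M ^ k) a b = 0 := by
    intro k
    induction k with
    | zero =>
      intro a b hab
      rw [pow_zero, Matrix.one_apply_ne]
      intro h
      rw [h] at hab
      omega
    | succ k ih =>
      intro a b hab
      rw [pow_succ', Matrix.mul_apply]
      apply Finset.sum_eq_zero
      intro c _
      by_cases hc : (a.1 : ℕ) ≤ (c.1 : ℕ)
      · rw [h a c hc, zero_mul]
      · rw [ih c b (by omega), mul_zero]
  ext a b
  rw [key (T + 1) a b (by omega)]
  rfl

/-- `downshift * (block lower triangular)` is strictly block lower. -/
lemma downshift_mul_strict {T n p : ℕ}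
    (M : Matrix (Fin (T + 1) × Fin n) (Fin (T + 1) × Fin p) ℝ)
    (hM : BlockLowerTri M) :
    ∀ a b, (a.1 : ℕ) ≤ (b.1 : ℕ) → (downshift T n * M) a b = 0 := by
  intro a b hab
  rw [Matrix.mul_apply]
  apply Finset.sum_eq_zero
  intro c _
  by_cases hc : (a.1 : ℕ) = (c.1 : ℕ) + 1 ∧ a.2 = c.2
  · rw [hM c b (by omega), mul_zero]
  · simp only [downshift, if_neg hc, zero_mul]

lemma blkDiag_lower {T n p : ℕ} (A : Matrix (Fin n) (Fin p) ℝ) :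
    BlockLowerTri (blkDiag (T := T) A) := by
  intro a b hab
  simp only [blkDiag]
  rw [if_neg]
  rintro ⟨h1, _⟩
  rw [h1] at hab
  omega

lemma lower_mul {T n p q : ℕ}
    (M : Matrix (Fin (T + 1) × Fin n) (Fin (T + 1) × Fin p) ℝ)
    (N : Matrix (Fin (T + 1) × Fin p) (Fin (T + 1) × Fin q) ℝ)
    (hM : BlockLowerTri M) (hN : BlockLowerTri N) : BlockLowerTri (M * N) := by
  intro a b hab
  rw [Matrix.mul_apply]
  apply Finset.sum_eq_zero
  intro c _
  by_cases hc : (a.1 : ℕ) < (c.1 : ℕ)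
  · rw [hM a c hc, zero_mul]
  · rw [hN c b (by omega), mul_zero]

lemma lower_add {T n p : ℕ}
    (M N : Matrix (Fin (T + 1) × Fin n) (Fin (T + 1) × Fin p) ℝ)
    (hM : BlockLowerTri M) (hN : BlockLowerTri N) : BlockLowerTri (M + N) := by
  intro a b hab
  simp [Matrix.add_apply, hM a b hab, hN a b hab]

theorem sls_parameterization
    (T n p : ℕ) (A : Matrix (Fin n) (Fin n) ℝ) (B : Matrix (Fin n) (Fin p) ℝ) :
    (∀ K : Matrix (Fin (T + 1) × Fin p) (Fin (T + 1) × Fin n) ℝ,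
      BlockLowerTri K →
      ∀ Φx Φu,
        Φx = (1 - downshift T n * (blkDiag A + blkDiag B * K))⁻¹ →
        Φu = K * Φx →
        (1 - downshift T n * blkDiag A) * Φx - (downshift T n * blkDiag B : Matrix (Fin (T + 1) × Fin n) (Fin (T + 1) × Fin p) ℝ) * Φu = 1) ∧
    (∀ (Φx : Matrix (Fin (T + 1) × Fin n) (Fin (T + 1) × Fin n) ℝ)
       (Φu : Matrix (Fin (T + 1) × Fin p) (Fin (T + 1) × Fin n) ℝ),
      BlockLowerTri Φx → BlockLowerTri Φu →
      (1 - downshift T n * blkDiag A) * Φx - (downshift T n * blkDiag B : Matrix (Fin (T + 1) × Fin n) (Fin (T + 1) × Fin p) ℝ) * Φu = 1 →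
      IsUnit Φx.det →
      ∀ K, K = Φu * Φx⁻¹ →
        (1 - downshift T n * (blkDiag A + blkDiag B * K))⁻¹ = Φx ∧
        K * (1 - downshift T n * (blkDiag A + blkDiag B * K))⁻¹ = Φu) := by
  constructor
  · -- forward direction
    intro K hK Φx Φu hx hu
    set N := downshift T n * (blkDiag A + blkDiag B * K) with hN
    have hlow : BlockLowerTri (blkDiag (T := T) A + blkDiag B * K) :=
      lower_add _ _ (blkDiag_lower A) (lower_mul _ _ (blkDiag_lower B) hK)
    have hnil : IsNilpotent N := ⟨T + 1, strict_nilpotent N (downshift_mul_strict _ hlow)⟩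
    have hunit : IsUnit (1 - N) := hnil.isUnit_one_sub
    have hdet : IsUnit (1 - N).det := (Matrix.isUnit_iff_isUnit_det _).mp hunit
    have hinv : (1 - N) * (1 - N)⁻¹ = 1 := Matrix.mul_nonsing_inv _ hdet
    have expand : (1 - downshift T n * blkDiag A) * Φx
        - downshift T n * blkDiag (T := T) B * Φu = (1 - N) * Φx := by
      rw [hu, hN]
      noncomm_ring
      simp [Matrix.mul_assoc]
      exact congrArg _ (Matrix.mul_assoc _ _ _).symm
    show (1 - downshift T n * blkDiag A) * Φx - downshift T n * blkDiag (T := T) B * Φu = 1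
    rw [expand, hx, hinv]
  · -- converse direction
    intro Φx Φu _ _ heq hdet K hKdef
    have hmul : (1 - downshift T n * (blkDiag A + blkDiag B * K)) * Φx = 1 := by
      have h1 : (1 - downshift T n * (blkDiag A + blkDiag B * K)) * Φx =
          (1 - downshift T n * blkDiag A) * Φx
            - downshift T n * blkDiag (T := T) B * (K * Φx) := by
        noncomm_ring
        rw [Matrix.mul_assoc (downshift T n) (blkDiag (T := T) B) (K * Φx)]
        exact congrArg (fun X => Φx + (-1 • (downshift T n * (blkDiag A * Φx)) + -1 • (downshift T n * X))) (Matrix.mul_assoc (blkDiag (T := T) B) K Φx)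
      have h2 : K * Φx = Φu := by
        rw [hKdef, Matrix.mul_assoc, Matrix.nonsing_inv_mul _ hdet, Matrix.mul_one]
      rw [h1, h2]
      exact heq
    have hinv : (1 - downshift T n * (blkDiag A + blkDiag B * K))⁻¹ = Φx :=
      Matrix.inv_eq_right_inv hmul
    refine ⟨hinv, ?_⟩
    rw [hinv, hKdef, Matrix.mul_assoc, Matrix.nonsing_inv_mul _ hdet, Matrix.mul_one]
end
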